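/- Define φ: V → S by φ(v) = v·φ and φ*: S → V by φ*(ψ) = Σ_i g(e_i,e_i) B(φ, e_i·ψ) e_i for an orthonormal basis {e_i} of V. Then φ and φ* are adjoint: B(φ(v), ψ) = g(v, φ*(ψ)) for all v ∈ V, ψ ∈ S. Moreover, for spinors φ, ψ, the endomorphism (−1)^{n(n−1)/2} ψ* ∘ φ − φ* ∘ ψ of V is antisymmetric with respect to g, and (−1)^{n(n−1)/2} ψ* ∘ φ + φ* ∘ ψ is symmetric with respect to g. -/

import Mathlib

open CliffordAlgebra

theorem stmt14 {k V S : Type*} [Field k] [AddCommGroup V] [Module k V]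
    [FiniteDimensional k V] [AddCommGroup S] [Module k S] [FiniteDimensional k S]
    (n : ℕ)
    (g : LinearMap.BilinForm k V) (Q : QuadraticForm k V)
    (h2 : (2 : k) ≠ 0)
    (hsymm : ∀ v w, g v w = g w v)
    (hQ : ∀ v, Q v = g v v)
    -- an orthonormal basis of `V`
    (b : Module.Basis (Fin (2 * n)) k V)
    (horth : ∀ i j, i ≠ j → g (b i) (b j) = 0)
    (hunit : ∀ i, g (b i) (b i) = 1 ∨ g (b i) (b i) = -1)
    -- the spinor representation
    (hdimS : Module.finrank k S = 2 ^ n)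
    (ρ : CliffordAlgebra Q ≃ₐ[k] Module.End k S)
    -- a nonzero spinor norm with its symmetry `B(φ,ψ) = (−1)^{n(n−1)/2} B(ψ,φ)`
    (B : S →ₗ[k] S →ₗ[k] k) (hBne : B ≠ 0)
    (hB : ∀ (v : V) (φ ψ : S), B (ρ (ι Q v) φ) ψ = B φ (ρ (ι Q v) ψ))
    (hBsymm : ∀ φ ψ : S, B φ ψ = (-1 : k) ^ (n * (n - 1) / 2) * B ψ φ) :
    letI star : S → S → V := fun φ ψ =>
      ∑ i, (g (b i) (b i) * B φ (ρ (ι Q (b i)) ψ)) • b i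
    -- `φ : V → S, v ↦ v·φ` and `φ* : S → V` are adjoint
    (∀ (φ : S) (v : V) (ψ : S), B (ρ (ι Q v) φ) ψ = g v (star φ ψ)) ∧
    -- `(−1)^{n(n−1)/2} ψ*∘φ − φ*∘ψ` is antisymmetric with respect to `g`
    (∀ φ ψ : S, ∀ v w : V,
      g ((-1 : k) ^ (n * (n - 1) / 2) • star ψ (ρ (ι Q v) φ)
          - star φ (ρ (ι Q v) ψ)) w
        + g v ((-1 : k) ^ (n * (n - 1) / 2) • star ψ (ρ (ι Q w) φ)
          - star φ (ρ (ι Q w) ψ)) = 0) ∧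
    -- `(−1)^{n(n−1)/2} ψ*∘φ + φ*∘ψ` is symmetric with respect to `g`
    (∀ φ ψ : S, ∀ v w : V,
      g ((-1 : k) ^ (n * (n - 1) / 2) • star ψ (ρ (ι Q v) φ)
          + star φ (ρ (ι Q v) ψ)) w
        = g v ((-1 : k) ^ (n * (n - 1) / 2) • star ψ (ρ (ι Q w) φ)
          + star φ (ρ (ι Q w) ψ))) := by
  beta_reduce
  set s : k := (-1 : k) ^ (n * (n - 1) / 2) with hs
  -- the adjoint identity
  have hadj : ∀ (φ : S) (v : V) (ψ : S), B (ρ (ι Q v) φ) ψ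
      = g v (∑ i, (g (b i) (b i) * B φ (ρ (ι Q (b i)) ψ)) • b i) := by
    intro φ v ψ
    rw [hB]
    have hv : ρ (ι Q v) ψ = ∑ i, b.repr v i • ρ (ι Q (b i)) ψ := by
      conv_lhs => rw [← b.sum_repr v]
      simp only [map_sum, map_smul, LinearMap.sum_apply, LinearMap.smul_apply]
    rw [hv, map_sum, map_sum]
    refine Finset.sum_congr rfl fun i _ => ?_
    rw [map_smul, map_smul, smul_eq_mul, smul_eq_mul]
    have hgv : g v (b i) = b.repr v i * g (b i) (b i) := by
      conv_lhs => rw [← b.sum_repr v]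
      rw [map_sum, LinearMap.sum_apply]
      rw [Finset.sum_eq_single i]
      · rw [map_smul, LinearMap.smul_apply, smul_eq_mul]
      · intro j _ hj
        rw [map_smul, LinearMap.smul_apply, smul_eq_mul, horth j i hj, mul_zero]
      · intro h; exact absurd (Finset.mem_univ i) h
    rw [hgv]
    rcases hunit i with h | h <;> rw [h] <;> ring
  -- combined: g u (star X Y) = B X ((ι u)·Y)
  have hg : ∀ (X Y : S) (u : V),
      g u (∑ i, (g (b i) (b i) * B X (ρ (ι Q (b i)) Y)) • b i) = B X (ρ (ι Q u) Y) := by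
    intro X Y u
    rw [← hadj, hB]
  -- Clifford relation
  have hmul : ∀ (v w : V) (ψ : S),
      ρ (ι Q v) (ρ (ι Q w) ψ) + ρ (ι Q w) (ρ (ι Q v) ψ) = (2 * g v w) • ψ := by
    intro v w ψ
    have h1 : ι Q v * ι Q w + ι Q w * ι Q v = algebraMap k _ (QuadraticMap.polar Q v w) :=
      CliffordAlgebra.ι_mul_ι_add_swap v w
    have hpolar : QuadraticMap.polar Q v w = 2 * g v w := by
      simp only [QuadraticMap.polar, hQ, map_add, LinearMap.add_apply]
      rw [hsymm w v]; ring
    have h2' := congrArg (fun x => (ρ x) ψ) h1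
    simp only [map_add, map_mul, LinearMap.add_apply, Module.End.mul_apply,
      AlgEquiv.commutes, Module.algebraMap_end_apply, hpolar] at h2'
    rw [h2', smul_smul]
  have hBmul : ∀ (χ φ : S) (v w : V),
      B χ (ρ (ι Q v) (ρ (ι Q w) φ)) + B χ (ρ (ι Q w) (ρ (ι Q v) φ))
        = 2 * g v w * B χ φ := by
    intro χ φ v w
    rw [← map_add, hmul, map_smul, smul_eq_mul]
  -- key swap identity
  have hswap : ∀ (φ ψ : S) (v w : V),
      s * B ψ (ρ (ι Q w) (ρ (ι Q v) φ)) = B φ (ρ (ι Q v) (ρ (ι Q w) ψ)) := by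
    intro φ ψ v w
    rw [← hBsymm (ρ (ι Q w) (ρ (ι Q v) φ)) ψ, hB, hB]
  refine ⟨hadj, ?_, ?_⟩
  · intro φ ψ v w
    rw [hsymm _ w]
    rw [map_sub, map_sub, map_smul, map_smul, smul_eq_mul, smul_eq_mul,
      hg, hg, hg, hg]
    linear_combination s * hBmul ψ φ w v - hBmul φ ψ w v
      - 2 * (g w v) * hBsymm φ ψ
  · intro φ ψ v w
    rw [hsymm _ w]
    rw [map_add, map_add, map_smul, map_smul, smul_eq_mul, smul_eq_mul,
      hg, hg, hg, hg]
    linear_combination hswap φ ψ v w - hswap φ ψ w v
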